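/- In the PN space (ℚ, ν, τ_π, τ_M) with ν_p(t) = t/(t+|p|), if a, b are irrational with a < b, then A = [a,b] ∩ ℚ is D-bounded and closed in the strong topology but not D-compact (there is a sequence in A with no strongly convergent subsequence with limit in A). -/

import Mathlib

open Filter

/-- ν_p(t) = t/(t+|p|) for t > 0, ν_p(0) = 0, on ℚ. -/
noncomputable def nuQ (p : ℚ) (t : ℝ) : ℝ :=
  if 0 < t then t / (t + |(p : ℝ)|) else 0

/-- Strong convergence in the PN space (ℚ, ν, τ_π, τ_M). -/
def SConv (s : ℕ → ℚ) (q : ℚ) : Prop :=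
  ∀ l : ℝ, 0 < l → ∃ N : ℕ, ∀ m ≥ N, nuQ (s m - q) l > 1 - l

/-- Probabilistic radius (infimum form). -/
noncomputable def radius (A : Set ℚ) (t : ℝ) : ℝ :=
  sInf ((fun p => nuQ p t) '' A)

lemma sconv_iff {s : ℕ → ℚ} {q : ℚ} :
    SConv s q ↔ Tendsto (fun n => ((s n : ℝ))) atTop (nhds (q : ℝ)) := by
  constructor
  · intro h
    rw [Metric.tendsto_atTop]
    intro ε hε
    set l := min (ε/2) (1/2) with hldef
    have hl0 : 0 < l := lt_min (by linarith) (by norm_num)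
    have hl1 : l ≤ 1/2 := min_le_right _ _
    have hl2 : l ≤ ε/2 := min_le_left _ _
    obtain ⟨N, hN⟩ := h l hl0
    refine ⟨N, fun m hm => ?_⟩
    have hnu := hN m hm
    rw [nuQ, if_pos hl0] at hnu
    set x := |((s m - q : ℚ) : ℝ)| with hxdef
    have hx0 : 0 ≤ x := abs_nonneg _
    have hd : 0 < l + x := by positivity
    have h2 : (1 - l) * (l + x) < l := (lt_div_iff₀ hd).mp hnu
    have hxε : x < ε := by nlinarith
    rw [Real.dist_eq]
    have : ((s m - q : ℚ) : ℝ) = (s m : ℝ) - q := by push_cast; ring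
    rw [← this]; exact hxε
  · intro h l hl
    by_cases hl1 : 1 ≤ l
    · refine ⟨0, fun m _ => ?_⟩
      rw [nuQ, if_pos hl]
      have hd : 0 < l + |((s m - q : ℚ) : ℝ)| := by positivity
      have : 0 < l / (l + |((s m - q : ℚ) : ℝ)|) := div_pos hl hd
      linarith
    · push_neg at hl1
      rw [Metric.tendsto_atTop] at h
      obtain ⟨N, hN⟩ := h (l ^ 2) (by positivity)
      refine ⟨N, fun m hm => ?_⟩
      have hx := hN m hm
      rw [Real.dist_eq] at hx
      rw [nuQ, if_pos hl]
      set x := |((s m - q : ℚ) : ℝ)| with hxdef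
      have hxeq : x = |(s m : ℝ) - q| := by rw [hxdef]; push_cast; ring_nf
      have hx2 : x < l ^ 2 := by rw [hxeq]; exact hx
      have hx0 : 0 ≤ x := abs_nonneg _
      have hd : 0 < l + x := by positivity
      rw [gt_iff_lt, lt_div_iff₀ hd]
      nlinarith

theorem stmt6 (a b : ℝ) (ha : Irrational a) (hb : Irrational b) (hab : a < b) :
    Tendsto (radius {p : ℚ | a ≤ (p : ℝ) ∧ (p : ℝ) ≤ b}) atTop (nhds 1) ∧
    (∀ s : ℕ → ℚ, (∀ n, s n ∈ {p : ℚ | a ≤ (p : ℝ) ∧ (p : ℝ) ≤ b}) →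
      ∀ q : ℚ, SConv s q → q ∈ {p : ℚ | a ≤ (p : ℝ) ∧ (p : ℝ) ≤ b}) ∧
    ¬ (∀ s : ℕ → ℚ, (∀ n, s n ∈ {p : ℚ | a ≤ (p : ℝ) ∧ (p : ℝ) ≤ b}) →
        ∃ q ∈ {p : ℚ | a ≤ (p : ℝ) ∧ (p : ℝ) ≤ b},
          ∃ st : ℕ → ℕ, StrictMono st ∧ SConv (s ∘ st) q) := by
  set A : Set ℚ := {p : ℚ | a ≤ (p : ℝ) ∧ (p : ℝ) ≤ b} with hA
  obtain ⟨p₀, hp₀a, hp₀b⟩ := exists_rat_btwn hab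
  have hp₀ : p₀ ∈ A := ⟨le_of_lt hp₀a, le_of_lt hp₀b⟩
  set M : ℝ := max |a| |b| with hM
  have hM0 : 0 ≤ M := le_trans (abs_nonneg a) (le_max_left _ _)
  refine ⟨?_, ?_, ?_⟩
  · -- D-bounded
    have hlow : Tendsto (fun t : ℝ => 1 - M / (t + M)) atTop (nhds 1) := by
      have : Tendsto (fun t : ℝ => M / (t + M)) atTop (nhds 0) :=
        Tendsto.div_atTop tendsto_const_nhds (tendsto_atTop_add_const_right _ _ tendsto_id)
      simpa using tendsto_const_nhds.sub this
    refine tendsto_of_tendsto_of_tendsto_of_le_of_le' hlow tendsto_const_nhds ?_ ?_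
    · filter_upwards [eventually_gt_atTop (0 : ℝ)] with t ht
      have htM : 0 < t + M := by linarith
      refine le_csInf ⟨nuQ p₀ t, Set.mem_image_of_mem _ hp₀⟩ ?_
      rintro y ⟨p, hp, rfl⟩
      have hpM : |(p : ℝ)| ≤ M := abs_le_max_abs_abs hp.1 hp.2
      simp only [nuQ, if_pos ht]
      have heq : 1 - M / (t + M) = t / (t + M) := by field_simp; ring
      rw [heq]
      gcongr
    · filter_upwards [eventually_gt_atTop (0 : ℝ)] with t ht
      have h1 : nuQ p₀ t ≤ 1 := by
        rw [nuQ, if_pos ht]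
        rw [div_le_one (by positivity)]
        simp [abs_nonneg]
      refine le_trans (csInf_le ?_ (Set.mem_image_of_mem _ hp₀)) h1
      refine ⟨0, ?_⟩
      rintro y ⟨p, _, rfl⟩
      simp only [nuQ]
      split <;> positivity
  · -- closed
    intro s hs q hq
    have hconv := sconv_iff.mp hq
    constructor
    · exact ge_of_tendsto hconv (Eventually.of_forall fun n => (hs n).1)
    · exact le_of_tendsto hconv (Eventually.of_forall fun n => (hs n).2)
  · -- not D-compact
    intro hcomp
    have hseq : ∀ n : ℕ, ∃ p : ℚ, a < (p : ℝ) ∧ (p : ℝ) < min b (a + 1 / (n + 1)) := by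
      intro n
      apply exists_rat_btwn
      refine lt_min hab ?_
      have : (0 : ℝ) < 1 / (n + 1) := by positivity
      linarith
    choose s hs1 hs2 using hseq
    have hsA : ∀ n, s n ∈ A := fun n =>
      ⟨(hs1 n).le, ((hs2 n).trans_le (min_le_left _ _)).le⟩
    obtain ⟨q, hqA, st, hst, hsconv⟩ := hcomp s hsA
    have hlim : Tendsto (fun n => ((s n : ℝ))) atTop (nhds a) := by
      have hup : Tendsto (fun n : ℕ => a + 1 / ((n : ℝ) + 1)) atTop (nhds a) := by
        have : Tendsto (fun n : ℕ => 1 / ((n : ℝ) + 1)) atTop (nhds 0) :=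
          tendsto_one_div_add_atTop_nhds_zero_nat
        simpa using tendsto_const_nhds.add this
      refine tendsto_of_tendsto_of_tendsto_of_le_of_le tendsto_const_nhds hup
        (fun n => le_of_lt (hs1 n)) (fun n => ?_)
      exact le_of_lt ((hs2 n).trans_le (min_le_right _ _))
    have hlim2 : Tendsto (fun n => ((s (st n) : ℝ))) atTop (nhds a) :=
      hlim.comp hst.tendsto_atTop
    have hq : Tendsto (fun n => ((s (st n) : ℝ))) atTop (nhds (q : ℝ)) := sconv_iff.mp hsconv
    have : (q : ℝ) = a := tendsto_nhds_unique hq hlim2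
    exact ha ⟨q, this⟩
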